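/- Let A = {a1 < a2 < ...} and B = {b1 < b2 < ...} be two infinite sequences of positive integers with b1 > 1 such that P(A) = ℕ \ B, let k be the index with a_k < b1 < a_{k+1}, so that P({a1, ..., a_k}) = [0, b1 − 1]. If b2 ≥ 3·b1 + 5, then P({a1, ..., a_{k+3}}) = [0, a_{k+3} + a_{k+2} + 2·b1] \ {b1, a_{k+3} + a_{k+2} + b1}. -/

import Mathlib

/-- The set of all finite subset sums of a set of positive integers
(finite sums of distinct elements; the empty sum 0 is included). -/
def subsetSums (S : Set ℕ) : Set ℕ :=
  {n | ∃ F : Finset ℕ, ↑F ⊆ S ∧ ∑ x ∈ F, x = n}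

/-- If `b₂ ≥ 3b₁+5` then
`P({a₁,…,a_{k+3}}) = [0, a_{k+3}+a_{k+2}+2b₁] \ {b₁, a_{k+3}+a_{k+2}+b₁}`.
Here `a i`, `b i` are the `(i+1)`-st elements of `A`, `B`. -/
lemma subsetSums_insert {x : ℕ} {S : Set ℕ} (hx : x ∉ S) :
    subsetSums (insert x S) = subsetSums S ∪ (x + ·) '' subsetSums S := by
  ext n
  constructor
  · rintro ⟨F, hF, rfl⟩
    by_cases hxF : x ∈ F
    · right
      refine ⟨∑ y ∈ F.erase x, y, ⟨F.erase x, ?_, rfl⟩, ?_⟩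
      · intro y hy
        simp only [Finset.coe_erase, Set.mem_diff, Set.mem_singleton_iff] at hy
        rcases hF hy.1 with h | h
        · exact absurd h hy.2
        · exact h
      · exact Finset.add_sum_erase F id hxF
    · left
      refine ⟨F, fun y hy => ?_, rfl⟩
      rcases hF hy with h | h
      · exact absurd (h ▸ hy) hxF
      · exact h
  · rintro (⟨F, hF, rfl⟩ | ⟨m, ⟨F, hF, rfl⟩, rfl⟩)
    · exact ⟨F, hF.trans (Set.subset_insert x S), rfl⟩
    · have hxF : x ∉ F := fun h => hx (hF h)
      exact ⟨insert x F, by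
        push_cast
        exact Set.insert_subset_insert hF, by rw [Finset.sum_insert hxF]⟩

lemma add_image (x : ℕ) (S : Set ℕ) :
    (x + ·) '' S = {n | x ≤ n ∧ n - x ∈ S} := by
  ext n
  simp only [Set.mem_image, Set.mem_setOf_eq]
  constructor
  · rintro ⟨m, hm, rfl⟩
    exact ⟨Nat.le_add_right _ _, by simpa using hm⟩
  · rintro ⟨h1, h2⟩
    exact ⟨n - x, h2, by omega⟩

lemma exists_big {a : ℕ → ℕ} (ha : StrictMono a) {n m : ℕ}
    (hn : n ∈ subsetSums (Set.range a)) (hnot : n ∉ subsetSums (a '' Set.Iio m)) :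
    a m ≤ n := by
  obtain ⟨F, hF, rfl⟩ := hn
  by_cases h : ↑F ⊆ a '' Set.Iio m
  · exact absurd ⟨F, h, rfl⟩ hnot
  · obtain ⟨y, hyF, hy⟩ := Set.not_subset.mp h
    obtain ⟨j, rfl⟩ := hF hyF
    have hjm : m ≤ j := by
      by_contra hc
      exact hy ⟨j, Set.mem_Iio.mpr (by omega), rfl⟩
    calc a m ≤ a j := ha.monotone hjm
    _ ≤ ∑ x ∈ F, x := Finset.single_le_sum (f := id) (fun i _ => Nat.zero_le _) hyF

theorem stmt4 (a b : ℕ → ℕ) (ha : StrictMono a) (hapos : ∀ i, 0 < a i)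
    (hb : StrictMono b) (hb1 : 1 < b 0)
    (hPA : subsetSums (Set.range a) = Set.univ \ Set.range b)
    (k : ℕ) (hk1 : a k < b 0) (hk2 : b 0 < a (k + 1))
    (hPk : subsetSums (a '' Set.Iio (k + 1)) = Set.Icc 0 (b 0 - 1))
    (hb2 : 3 * b 0 + 5 ≤ b 1) :
    subsetSums (a '' Set.Iio (k + 4)) =
      Set.Icc 0 (a (k + 3) + a (k + 2) + 2 * b 0) \
        ({b 0, a (k + 3) + a (k + 2) + b 0} : Set ℕ) := by
  have hnotmem : ∀ n : ℕ, n ≠ b 0 → n < b 1 → n ∈ subsetSums (Set.range a) := by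
    intro n h0 h1
    rw [hPA]
    refine ⟨trivial, ?_⟩
    rintro ⟨j, rfl⟩
    match j with
    | 0 => exact h0 rfl
    | j+1 =>
      have := hb.monotone (Nat.le_add_left 1 j)
      omega
  have hins : ∀ m : ℕ, a '' Set.Iio (m+1) = insert (a m) (a '' Set.Iio m) := by
    intro m
    rw [show Set.Iio (m+1) = insert m (Set.Iio m) from by ext; simp,
      Set.image_insert_eq]
  have hnm : ∀ m : ℕ, a m ∉ a '' Set.Iio m := by
    rintro m ⟨j, hj, hja⟩
    have hjm := ha.injective hja
    rw [Set.mem_Iio] at hj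
    omega
  have hak1 : a (k+1) = b 0 + 1 := by
    have h1 : (b 0 + 1) ∈ subsetSums (Set.range a) := hnotmem _ (by omega) (by omega)
    have h2 : (b 0 + 1) ∉ subsetSums (a '' Set.Iio (k+1)) := by
      rw [hPk]; simp only [Set.mem_Icc]; omega
    have := exists_big ha h1 h2
    omega
  have P2 : subsetSums (a '' Set.Iio (k+2)) = Set.Icc 0 (2 * b 0) \ {b 0} := by
    rw [show k+2 = (k+1)+1 from rfl, hins (k+1), subsetSums_insert (hnm (k+1)), hPk,
      add_image, hak1]
    ext n
    simp only [Set.mem_union, Set.mem_Icc, Set.mem_setOf_eq, Set.mem_diff,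
      Set.mem_singleton_iff]
    omega
  have hak2u : a (k+2) ≤ 2 * b 0 + 1 := by
    have h1 : (2 * b 0 + 1) ∈ subsetSums (Set.range a) := hnotmem _ (by omega) (by omega)
    have h2 : (2 * b 0 + 1) ∉ subsetSums (a '' Set.Iio (k+2)) := by
      rw [P2]
      simp only [Set.mem_diff, Set.mem_Icc, Set.mem_singleton_iff, not_and, not_not]
      omega
    exact exists_big ha h1 h2
  have hak2l : b 0 + 2 ≤ a (k+2) := by
    have := ha (show k+1 < k+2 by omega); omega
  have P3 : subsetSums (a '' Set.Iio (k+3)) =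
      Set.Icc 0 (a (k+2) + 2 * b 0) \ {b 0, a (k+2) + b 0} := by
    rw [show k+3 = (k+2)+1 from rfl, hins (k+2), subsetSums_insert (hnm (k+2)), P2,
      add_image]
    ext n
    simp only [Set.mem_union, Set.mem_Icc, Set.mem_setOf_eq, Set.mem_diff,
      Set.mem_singleton_iff, Set.mem_insert_iff]
    omega
  have hak3u : a (k+3) ≤ a (k+2) + b 0 := by
    have h1 : (a (k+2) + b 0) ∈ subsetSums (Set.range a) :=
      hnotmem _ (by omega) (by omega)
    have h2 : (a (k+2) + b 0) ∉ subsetSums (a '' Set.Iio (k+3)) := by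
      rw [P3]
      rintro ⟨-, hc⟩
      exact hc (by simp)
    exact exists_big ha h1 h2
  have hak3l : a (k+2) + 1 ≤ a (k+3) := by
    have := ha (show k+2 < k+3 by omega); omega
  rw [show k+4 = (k+3)+1 from rfl, hins (k+3), subsetSums_insert (hnm (k+3)), P3,
    add_image]
  ext n
  simp only [Set.mem_union, Set.mem_Icc, Set.mem_setOf_eq, Set.mem_diff,
    Set.mem_singleton_iff, Set.mem_insert_iff]
  omega
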